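/- Let μ be the self-similar measure generated by the 2ℓ maps S_i. For every ℓ-adic interval I there exist nonnegative reals A(I) and B(I), depending only on I, such that for every ℓ-adic interval J: μ(IJ) = A(I) μ(J) + B(I) μ(T(J)), where IJ = I ∩ σ^{−n}(J) (n the generation of I) and T(x) = 1 − x. -/

import Mathlib

open MeasureTheory Filter Topology ENNReal

noncomputable section

/-- The ℓ-adic interval of generation `n` with index `k`. -/
def adicI (ℓ n k : ℕ) : Set ℝ := Set.Ico ((k : ℝ) / ℓ ^ n) ((k + 1 : ℝ) / ℓ ^ n)

/-- The mass of a set for a measure, as a real number. -/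
def mss (μ : Measure ℝ) (s : Set ℝ) : ℝ := (μ s).toReal

/-- The `2ℓ` similitudes of ratio `±1/ℓ`. -/
def simMapT (ℓ i : ℕ) (x : ℝ) : ℝ :=
  if i < ℓ then x / ℓ + i / ℓ else -x / ℓ + ((i - ℓ + 1 : ℕ) : ℝ) / ℓ

/-- The reflection `T(x) = 1 - x`. -/
def refl1 (x : ℝ) : ℝ := 1 - x

/-- The measure `ν = (μ + μ ∘ T)/2`. -/
def nuT (μ : Measure ℝ) : Measure ℝ := (2 : ℝ≥0∞)⁻¹ • (μ + μ.map refl1)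

/-- Partition-function sequence `u_n = ∑_{I ∈ F_n, m(I) ≠ 0} m(I)^q`. -/
def uSeq (ℓ : ℕ) (μ : Measure ℝ) (q : ℝ) (n : ℕ) : ℝ :=
  ∑ k ∈ (Finset.range (ℓ ^ n)).filter (fun k => mss μ (adicI ℓ n k) ≠ 0),
    mss μ (adicI ℓ n k) ^ q

/-- The `L^q`-spectrum `τ(q)` of a measure, defined with a `limsup`. -/
def Lsp (ℓ : ℕ) (μ : Measure ℝ) (q : ℝ) : ℝ :=
  limsup (fun n : ℕ => Real.log (uSeq ℓ μ q n) / (n * Real.log ℓ)) atTop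

/-- `‖M‖₁`: the sum of the first-row entries. -/
def normOne (M : Matrix (Fin 2) (Fin 2) ℝ) : ℝ := M 0 0 + M 0 1

/-- `‖M‖`: half of the sum of all entries. -/
def normH2 (M : Matrix (Fin 2) (Fin 2) ℝ) : ℝ := (M 0 0 + M 0 1 + M 1 0 + M 1 1) / 2

/-- The matrix `M_ε`. -/
def MmatT (ℓ : ℕ) (p : ℕ → ℝ) (ε : ℕ) : Matrix (Fin 2) (Fin 2) ℝ :=
  !![p ε, p (ε + ℓ); p (2 * ℓ - 1 - ε), p (ℓ - 1 - ε)]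

/-- The ℓ-adic interval `I_{ε₁⋯ε_n}` associated with a word. -/
def wordI (ℓ n : ℕ) (ε : Fin n → ℕ) : Set ℝ :=
  Set.Ico (∑ i : Fin n, (ε i : ℝ) / ℓ ^ ((i : ℕ) + 1))
    (∑ i : Fin n, (ε i : ℝ) / ℓ ^ ((i : ℕ) + 1) + 1 / ℓ ^ n)

/-- The ℓ-adic shift `σ(x) = ℓx (mod 1)`. -/
def shiftM (ℓ : ℕ) (x : ℝ) : ℝ := Int.fract (ℓ * x)

/-- `I_n(x)`: the ℓ-adic interval of generation `n` containing `x`. -/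
def Iofx (ℓ n : ℕ) (x : ℝ) : Set ℝ := adicI ℓ n (⌊(ℓ : ℝ) ^ n * x⌋).toNat

/-- The level set `E_α(m)` of points of `[0,1)` with local dimension `α`. -/
def ESet (ℓ : ℕ) (μ : Measure ℝ) (α : ℝ) : Set ℝ :=
  {x ∈ Set.Ico (0 : ℝ) 1 |
    Tendsto (fun n : ℕ => -Real.log (mss μ (Iofx ℓ n x)) / (n * Real.log ℓ)) atTop (𝓝 α)}

lemma simMapT_measurable (ℓ i : ℕ) : Measurable (simMapT ℓ i) := by
  unfold simMapT; split <;> fun_prop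

lemma meas_apply {ℓ : ℕ} {p : ℕ → ℝ} {μ : Measure ℝ}
    (hself : μ = ∑ i ∈ Finset.range (2 * ℓ), ENNReal.ofReal (p i) • μ.map (simMapT ℓ i))
    {E : Set ℝ} (hE : MeasurableSet E) :
    μ E = ∑ i ∈ Finset.range (2 * ℓ), ENNReal.ofReal (p i) * μ (simMapT ℓ i ⁻¹' E) := by
  conv_lhs => rw [hself]
  rw [Measure.finset_sum_apply]
  exact Finset.sum_congr rfl fun i _ => by
    rw [Measure.smul_apply, smul_eq_mul, Measure.map_apply (simMapT_measurable ℓ i) hE]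

lemma pre_direct_Ico {ℓ i : ℕ} (hi : i < ℓ) (a b : ℝ) :
    simMapT ℓ i ⁻¹' Set.Ico a b = Set.Ico (ℓ * a - i) (ℓ * b - i) := by
  have hℓ : (0:ℝ) < ℓ := by exact_mod_cast Nat.zero_lt_of_lt hi
  ext x
  simp only [Set.mem_preimage, simMapT, if_pos hi, Set.mem_Ico, ← add_div,
    le_div_iff₀ hℓ, div_lt_iff₀ hℓ]
  constructor <;> rintro ⟨h1, h2⟩ <;> constructor <;> linarith

lemma pre_direct_Ioc {ℓ i : ℕ} (hi : i < ℓ) (a b : ℝ) :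
    simMapT ℓ i ⁻¹' Set.Ioc a b = Set.Ioc (ℓ * a - i) (ℓ * b - i) := by
  have hℓ : (0:ℝ) < ℓ := by exact_mod_cast Nat.zero_lt_of_lt hi
  ext x
  simp only [Set.mem_preimage, simMapT, if_pos hi, Set.mem_Ioc, ← add_div,
    lt_div_iff₀ hℓ, div_le_iff₀ hℓ]
  constructor <;> rintro ⟨h1, h2⟩ <;> constructor <;> linarith

lemma pre_refl_Ico {ℓ i : ℕ} (hℓ0 : 0 < ℓ) (hi : ¬ i < ℓ) (a b : ℝ) :
    simMapT ℓ i ⁻¹' Set.Ico a b =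
      Set.Ioc (((i - ℓ + 1 : ℕ) : ℝ) - ℓ * b) (((i - ℓ + 1 : ℕ) : ℝ) - ℓ * a) := by
  have hℓ : (0:ℝ) < ℓ := by exact_mod_cast hℓ0
  ext x
  simp only [Set.mem_preimage, simMapT, if_neg hi, Set.mem_Ico, Set.mem_Ioc]
  rw [show -x/(ℓ:ℝ) + ((i - ℓ + 1 : ℕ) : ℝ)/ℓ = (((i - ℓ + 1 : ℕ) : ℝ) - x)/ℓ by ring,
    le_div_iff₀ hℓ, div_lt_iff₀ hℓ]
  constructor <;> rintro ⟨h1, h2⟩ <;> constructor <;> linarith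

lemma pre_refl_Ioc {ℓ i : ℕ} (hℓ0 : 0 < ℓ) (hi : ¬ i < ℓ) (a b : ℝ) :
    simMapT ℓ i ⁻¹' Set.Ioc a b =
      Set.Ico (((i - ℓ + 1 : ℕ) : ℝ) - ℓ * b) (((i - ℓ + 1 : ℕ) : ℝ) - ℓ * a) := by
  have hℓ : (0:ℝ) < ℓ := by exact_mod_cast hℓ0
  ext x
  simp only [Set.mem_preimage, simMapT, if_neg hi, Set.mem_Ico, Set.mem_Ioc]
  rw [show -x/(ℓ:ℝ) + ((i - ℓ + 1 : ℕ) : ℝ)/ℓ = (((i - ℓ + 1 : ℕ) : ℝ) - x)/ℓ by ring,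
    lt_div_iff₀ hℓ, div_le_iff₀ hℓ]
  constructor <;> rintro ⟨h1, h2⟩ <;> constructor <;> linarith

lemma pre_direct_pt {ℓ i : ℕ} (hi : i < ℓ) (y : ℝ) :
    simMapT ℓ i ⁻¹' {y} = {(ℓ:ℝ) * y - i} := by
  have hℓ : (0:ℝ) < ℓ := by exact_mod_cast Nat.zero_lt_of_lt hi
  ext x
  simp only [Set.mem_preimage, simMapT, if_pos hi, Set.mem_singleton_iff, ← add_div,
    div_eq_iff hℓ.ne']
  constructor <;> intro h <;> linarith

lemma pre_refl_pt {ℓ i : ℕ} (hℓ0 : 0 < ℓ) (hi : ¬ i < ℓ) (y : ℝ) :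
    simMapT ℓ i ⁻¹' {y} = {((i - ℓ + 1 : ℕ) : ℝ) - ℓ * y} := by
  have hℓ : (0:ℝ) < ℓ := by exact_mod_cast hℓ0
  ext x
  simp only [Set.mem_preimage, simMapT, if_neg hi, Set.mem_singleton_iff]
  rw [show -x/(ℓ:ℝ) + ((i - ℓ + 1 : ℕ) : ℝ)/ℓ = (((i - ℓ + 1 : ℕ) : ℝ) - x)/ℓ by ring,
    div_eq_iff hℓ.ne']
  constructor <;> intro h <;> linarith

section Main
variable {ℓ : ℕ} {p : ℕ → ℝ} {μ : Measure ℝ}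

lemma hsum1 (hp : ∀ i, 0 ≤ p i) (hsum : ∑ i ∈ Finset.range (2 * ℓ), p i = 1) :
    ∑ i ∈ Finset.range (2 * ℓ), ENNReal.ofReal (p i) = 1 := by
  rw [← ENNReal.ofReal_sum_of_nonneg (fun i _ => hp i), hsum, ENNReal.ofReal_one]

lemma null_out [IsProbabilityMeasure μ] (hℓ : 2 ≤ ℓ) (hp : ∀ i, 0 ≤ p i)
    (hsum : ∑ i ∈ Finset.range (2 * ℓ), p i = 1)
    (hself : μ = ∑ i ∈ Finset.range (2 * ℓ), ENNReal.ofReal (p i) • μ.map (simMapT ℓ i)) :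
    μ (Set.Iio 0 ∪ Set.Ioi 1) = 0 := by
  have hℓR : (1:ℝ) < ℓ := by exact_mod_cast hℓ.trans_lt' one_lt_two
  have hℓ0 : (0:ℝ) < ℓ := by linarith
  -- one contraction step
  have hstep : ∀ r : ℝ, 0 ≤ r →
      μ (Set.Iio (-r) ∪ Set.Ioi (1+r)) ≤ μ (Set.Iio (-((ℓ:ℝ)*r)) ∪ Set.Ioi (1+(ℓ:ℝ)*r)) := by
    intro r hr
    rw [meas_apply hself (measurableSet_Iio.union measurableSet_Ioi)]
    calc ∑ i ∈ Finset.range (2*ℓ), ENNReal.ofReal (p i) *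
            μ (simMapT ℓ i ⁻¹' (Set.Iio (-r) ∪ Set.Ioi (1+r)))
        ≤ ∑ i ∈ Finset.range (2*ℓ), ENNReal.ofReal (p i) *
            μ (Set.Iio (-((ℓ:ℝ)*r)) ∪ Set.Ioi (1+(ℓ:ℝ)*r)) := by
          refine Finset.sum_le_sum fun i hi => mul_le_mul_right (measure_mono ?_) _
          intro x hx
          simp only [Set.mem_preimage, Set.mem_union, Set.mem_Iio, Set.mem_Ioi, simMapT] at hx ⊢
          rw [Finset.mem_range] at hi
          by_cases h2 : i < ℓ
          · rw [if_pos h2] at hx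
            have hic : (i:ℝ) + 1 ≤ ℓ := by exact_mod_cast h2
            have hic0 : (0:ℝ) ≤ i := Nat.cast_nonneg i
            rw [← add_div] at hx
            rcases hx with hx | hx
            · rw [div_lt_iff₀ hℓ0] at hx
              left; nlinarith
            · rw [lt_div_iff₀ hℓ0] at hx
              right; nlinarith
          · rw [if_neg h2] at hx
            have h1c : (1:ℝ) ≤ ((i - ℓ + 1 : ℕ) : ℝ) := by exact_mod_cast Nat.le_add_left 1 (i-ℓ)
            have h2c : ((i - ℓ + 1 : ℕ) : ℝ) ≤ ℓ := by
              have : i - ℓ + 1 ≤ ℓ := by omega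
              exact_mod_cast this
            rw [show -x/(ℓ:ℝ) + ((i - ℓ + 1 : ℕ) : ℝ)/ℓ = (((i - ℓ + 1 : ℕ) : ℝ) - x)/ℓ
              by ring] at hx
            rcases hx with hx | hx
            · rw [div_lt_iff₀ hℓ0] at hx
              right; nlinarith
            · rw [lt_div_iff₀ hℓ0] at hx
              left; nlinarith
      _ = μ (Set.Iio (-((ℓ:ℝ)*r)) ∪ Set.Ioi (1+(ℓ:ℝ)*r)) := by
          rw [← Finset.sum_mul, hsum1 hp hsum, one_mul]
  have hiter : ∀ (j : ℕ) (r : ℝ), 0 ≤ r →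
      μ (Set.Iio (-r) ∪ Set.Ioi (1+r)) ≤ μ (Set.Iio (-((ℓ:ℝ)^j*r)) ∪ Set.Ioi (1+(ℓ:ℝ)^j*r)) := by
    intro j
    induction j with
    | zero => intro r hr; simp
    | succ j ih =>
      intro r hr
      refine (ih r hr).trans ?_
      have := hstep ((ℓ:ℝ)^j*r) (by positivity)
      have e : (ℓ:ℝ) * ((ℓ:ℝ)^j*r) = (ℓ:ℝ)^(j+1)*r := by ring
      rwa [e] at this
  have hzero : ∀ r : ℝ, 0 < r → μ (Set.Iio (-r) ∪ Set.Ioi (1+r)) = 0 := by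
    intro r hr
    set s : ℕ → Set ℝ := fun j => Set.Iio (-((ℓ:ℝ)^j*r)) ∪ Set.Ioi (1+(ℓ:ℝ)^j*r) with hs
    have hanti : Antitone s := by
      intro j j' hjj
      have : (ℓ:ℝ)^j*r ≤ (ℓ:ℝ)^j'*r :=
        mul_le_mul_of_nonneg_right (pow_le_pow_right₀ hℓR.le hjj) hr.le
      exact Set.union_subset_union (Set.Iio_subset_Iio (by linarith))
        (Set.Ioi_subset_Ioi (by linarith))
    have hempty : ⋂ j, s j = ∅ := by
      rw [Set.eq_empty_iff_forall_notMem]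
      intro x hx
      rw [Set.mem_iInter] at hx
      obtain ⟨j, hj⟩ := pow_unbounded_of_one_lt (|x|/r) hℓR
      have hj' : |x| < (ℓ:ℝ)^j * r := by
        rw [div_lt_iff₀ hr] at hj; linarith [hj]
      have h1 := le_abs_self x
      have h2 := neg_abs_le x
      rcases hx j with h | h
      · simp only [Set.mem_Iio] at h; linarith
      · simp only [Set.mem_Ioi] at h
        have : (0:ℝ) < (ℓ:ℝ)^j*r := by positivity
        linarith
    have htend := tendsto_measure_iInter_atTop
      (fun j => ((measurableSet_Iio.union measurableSet_Ioi)).nullMeasurableSet)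
      hanti ⟨0, measure_ne_top μ _⟩
    rw [hempty, measure_empty] at htend
    have hle : ∀ j, μ (Set.Iio (-r) ∪ Set.Ioi (1+r)) ≤ μ (s j) := fun j => hiter j r hr.le
    have := ge_of_tendsto' htend hle
    exact le_antisymm this zero_le
  have hU : μ (⋃ n : ℕ, (Set.Iio (-(1/((n:ℝ)+1))) ∪ Set.Ioi (1+1/((n:ℝ)+1)))) = 0 :=
    measure_iUnion_null fun n => hzero _ (by positivity)
  refine measure_mono_null ?_ hU
  intro x hx
  rcases hx with hx | hx
  · simp only [Set.mem_Iio] at hx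
    obtain ⟨n, hn⟩ := exists_nat_one_div_lt (show (0:ℝ) < -x by linarith)
    exact Set.mem_iUnion.mpr ⟨n, Or.inl (by simp only [Set.mem_Iio]; linarith)⟩
  · simp only [Set.mem_Ioi] at hx
    obtain ⟨n, hn⟩ := exists_nat_one_div_lt (show (0:ℝ) < x - 1 by linarith)
    exact Set.mem_iUnion.mpr ⟨n, Or.inr (by simp only [Set.mem_Ioi]; linarith)⟩

end Main

section Main2
variable {ℓ : ℕ} {p : ℕ → ℝ} {μ : Measure ℝ}

lemma sum_two {f : ℕ → ℝ≥0∞} {N a b : ℕ} (hab : a ≠ b) (ha : a < N) (hb : b < N)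
    (h : ∀ i ∈ Finset.range N, f i = (if i = a then f a else 0) + (if i = b then f b else 0)) :
    ∑ i ∈ Finset.range N, f i = f a + f b := by
  rw [Finset.sum_congr rfl h, Finset.sum_add_distrib,
    Finset.sum_ite_eq' (Finset.range N) a (fun _ => f a),
    Finset.sum_ite_eq' (Finset.range N) b (fun _ => f b),
    if_pos (Finset.mem_range.mpr ha), if_pos (Finset.mem_range.mpr hb)]

lemma null_atoms [IsProbabilityMeasure μ] (hℓ : 2 ≤ ℓ) (hp : ∀ i, 0 ≤ p i)
    (hsum : ∑ i ∈ Finset.range (2 * ℓ), p i = 1)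
    (hpos : ∀ i < ℓ, 0 < p i + p (i + ℓ))
    (hself : μ = ∑ i ∈ Finset.range (2 * ℓ), ENNReal.ofReal (p i) • μ.map (simMapT ℓ i))
    (hIio : μ (Set.Iio 0) = 0) (hIoi : μ (Set.Ioi 1) = 0) :
    μ {0} = 0 ∧ μ {1} = 0 := by
  have hℓ0 : 0 < ℓ := by omega
  have h0 : μ {(0:ℝ)} = ENNReal.ofReal (p 0) * μ {(0:ℝ)} + ENNReal.ofReal (p ℓ) * μ {(1:ℝ)} := by
    have e := meas_apply hself (measurableSet_singleton (0:ℝ))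
    have key : ∀ i ∈ Finset.range (2*ℓ),
        ENNReal.ofReal (p i) * μ (simMapT ℓ i ⁻¹' {(0:ℝ)}) =
          (if i = 0 then ENNReal.ofReal (p 0) * μ (simMapT ℓ 0 ⁻¹' {(0:ℝ)}) else 0) +
          (if i = ℓ then ENNReal.ofReal (p ℓ) * μ (simMapT ℓ ℓ ⁻¹' {(0:ℝ)}) else 0) := by
      intro i hi
      rw [Finset.mem_range] at hi
      by_cases h2 : i < ℓ
      · by_cases h3 : i = 0
        · subst h3; rw [if_pos rfl, if_neg (by omega), add_zero]
        · rw [if_neg h3, if_neg (by omega), zero_add]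
          have hlt : ((ℓ:ℝ) * 0 - i) < 0 := by
            have : (1:ℝ) ≤ i := by exact_mod_cast Nat.one_le_iff_ne_zero.mpr h3
            linarith
          have hz : μ (simMapT ℓ i ⁻¹' {(0:ℝ)}) = 0 := by
            rw [pre_direct_pt h2]
            exact measure_mono_null
              (show {((ℓ:ℝ) * 0 - i)} ⊆ Set.Iio 0 from Set.singleton_subset_iff.mpr hlt) hIio
          rw [hz, mul_zero]
      · by_cases h3 : i = ℓ
        · subst h3; rw [if_pos rfl, if_neg (by omega), zero_add]
        · rw [if_neg (by omega), if_neg h3, add_zero]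
          have hlt : (1:ℝ) < ((i - ℓ + 1 : ℕ) : ℝ) - (ℓ:ℝ) * 0 := by
            have h4 : (2:ℝ) ≤ ((i - ℓ + 1 : ℕ) : ℝ) := by
              exact_mod_cast (show 2 ≤ i - ℓ + 1 by omega)
            linarith
          have hz : μ (simMapT ℓ i ⁻¹' {(0:ℝ)}) = 0 := by
            rw [pre_refl_pt hℓ0 h2]
            exact measure_mono_null (Set.singleton_subset_iff.mpr hlt) hIoi
          rw [hz, mul_zero]
    rw [sum_two (by omega) (by omega) (by omega) key] at e
    rw [pre_direct_pt hℓ0 0, pre_refl_pt hℓ0 (lt_irrefl ℓ) 0] at e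
    have e1 : ((ℓ:ℝ) * 0 - (0:ℕ)) = 0 := by norm_num
    have e2 : ((ℓ - ℓ + 1 : ℕ) : ℝ) - (ℓ:ℝ) * 0 = 1 := by
      rw [Nat.sub_self]; norm_num
    rw [e1, e2] at e
    exact e
  have h1 : μ {(1:ℝ)} = ENNReal.ofReal (p (ℓ-1)) * μ {(1:ℝ)}
      + ENNReal.ofReal (p (2*ℓ-1)) * μ {(0:ℝ)} := by
    have e := meas_apply hself (measurableSet_singleton (1:ℝ))
    have key : ∀ i ∈ Finset.range (2*ℓ),
        ENNReal.ofReal (p i) * μ (simMapT ℓ i ⁻¹' {(1:ℝ)}) =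
          (if i = ℓ-1 then ENNReal.ofReal (p (ℓ-1)) * μ (simMapT ℓ (ℓ-1) ⁻¹' {(1:ℝ)}) else 0) +
          (if i = 2*ℓ-1 then ENNReal.ofReal (p (2*ℓ-1)) * μ (simMapT ℓ (2*ℓ-1) ⁻¹' {(1:ℝ)})
            else 0) := by
      intro i hi
      rw [Finset.mem_range] at hi
      by_cases h2 : i < ℓ
      · by_cases h3 : i = ℓ-1
        · subst h3; rw [if_pos rfl, if_neg (by omega), add_zero]
        · rw [if_neg h3, if_neg (by omega), zero_add]
          have hc : (i:ℝ) + 2 ≤ ℓ := by exact_mod_cast (show i + 2 ≤ ℓ by omega)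
          have hlt : (1:ℝ) < (ℓ:ℝ) * 1 - i := by linarith
          have hz : μ (simMapT ℓ i ⁻¹' {(1:ℝ)}) = 0 := by
            rw [pre_direct_pt h2]
            exact measure_mono_null (Set.singleton_subset_iff.mpr hlt) hIoi
          rw [hz, mul_zero]
      · by_cases h3 : i = 2*ℓ-1
        · subst h3; rw [if_pos rfl, if_neg (by omega), zero_add]
        · rw [if_neg (by omega), if_neg h3, add_zero]
          have hc : ((i - ℓ + 1 : ℕ) : ℝ) + 1 ≤ ℓ := by
            exact_mod_cast (show (i - ℓ + 1) + 1 ≤ ℓ by omega)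
          have hlt : ((i - ℓ + 1 : ℕ) : ℝ) - (ℓ:ℝ) * 1 < 0 := by linarith
          have hz : μ (simMapT ℓ i ⁻¹' {(1:ℝ)}) = 0 := by
            rw [pre_refl_pt hℓ0 h2]
            exact measure_mono_null
              (show {(((i - ℓ + 1 : ℕ) : ℝ) - (ℓ:ℝ) * 1)} ⊆ Set.Iio 0 from
                Set.singleton_subset_iff.mpr hlt) hIio
          rw [hz, mul_zero]
    rw [sum_two (by omega) (by omega) (by omega) key] at e
    rw [pre_direct_pt (show ℓ-1 < ℓ by omega) 1, pre_refl_pt hℓ0 (show ¬ 2*ℓ-1 < ℓ by omega) 1] at e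
    have e1 : (ℓ:ℝ) * 1 - ((ℓ-1 : ℕ):ℝ) = 1 := by
      rw [Nat.cast_sub (by omega)]; push_cast; ring
    have e2 : ((2*ℓ-1 - ℓ + 1 : ℕ):ℝ) - (ℓ:ℝ) * 1 = 0 := by
      rw [show 2*ℓ-1-ℓ+1 = ℓ by omega]; ring
    rw [e1, e2] at e
    exact e
  set a := (μ {(0:ℝ)}).toReal with hadef
  set b := (μ {(1:ℝ)}).toReal with hbdef
  have ha : a = p 0 * a + p ℓ * b := by
    rw [hadef]
    conv_lhs => rw [h0]
    rw [ENNReal.toReal_add (ENNReal.mul_ne_top ENNReal.ofReal_ne_top (measure_ne_top μ _))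
      (ENNReal.mul_ne_top ENNReal.ofReal_ne_top (measure_ne_top μ _)),
      ENNReal.toReal_mul, ENNReal.toReal_mul, ENNReal.toReal_ofReal (hp 0),
      ENNReal.toReal_ofReal (hp ℓ)]
  have hb : b = p (ℓ-1) * b + p (2*ℓ-1) * a := by
    rw [hbdef]
    conv_lhs => rw [h1]
    rw [ENNReal.toReal_add (ENNReal.mul_ne_top ENNReal.ofReal_ne_top (measure_ne_top μ _))
      (ENNReal.mul_ne_top ENNReal.ofReal_ne_top (measure_ne_top μ _)),
      ENNReal.toReal_mul, ENNReal.toReal_mul, ENNReal.toReal_ofReal (hp _),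
      ENNReal.toReal_ofReal (hp _)]
  have ha0 : 0 ≤ a := ENNReal.toReal_nonneg
  have hb0 : 0 ≤ b := ENNReal.toReal_nonneg
  have key2 : ∀ (s : Finset ℕ), s ⊆ Finset.range (2*ℓ) → ∑ i ∈ s, p i ≤ 1 := fun s hs =>
    hsum ▸ Finset.sum_le_sum_of_subset_of_nonneg hs (fun i _ _ => hp i)
  have h4a := key2 {0, 1, ℓ, 1+ℓ} (by
    simp only [Finset.insert_subset_iff, Finset.singleton_subset_iff, Finset.mem_range]
    omega)
  rw [Finset.sum_insert (by simp only [Finset.mem_insert, Finset.mem_singleton]; omega),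
    Finset.sum_insert (by simp only [Finset.mem_insert, Finset.mem_singleton]; omega),
    Finset.sum_insert (by simp only [Finset.mem_singleton]; omega),
    Finset.sum_singleton] at h4a
  have h4b := key2 {0, ℓ-1, ℓ, 2*ℓ-1} (by
    simp only [Finset.insert_subset_iff, Finset.singleton_subset_iff, Finset.mem_range]
    omega)
  rw [Finset.sum_insert (by simp only [Finset.mem_insert, Finset.mem_singleton]; omega),
    Finset.sum_insert (by simp only [Finset.mem_insert, Finset.mem_singleton]; omega),
    Finset.sum_insert (by simp only [Finset.mem_singleton]; omega),
    Finset.sum_singleton] at h4b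
  have hpos1 := hpos 1 (by omega)
  have hpos0 := hpos 0 hℓ0
  rw [zero_add] at hpos0
  have hab : a = 0 ∧ b = 0 := by
    rcases le_total a b with h | h
    · have hb0' : b = 0 := by
        nlinarith [mul_nonneg (hp (2*ℓ-1)) (sub_nonneg.mpr h), hp (ℓ-1), hp (2*ℓ-1)]
      exact ⟨le_antisymm (hb0' ▸ h) ha0, hb0'⟩
    · have ha0' : a = 0 := by
        nlinarith [mul_nonneg (hp ℓ) (sub_nonneg.mpr h), hp 0, hp ℓ]
      exact ⟨ha0', le_antisymm (ha0' ▸ h) hb0⟩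
  constructor
  · have h5 := hab.1
    rw [hadef, ENNReal.toReal_eq_zero_iff] at h5
    exact h5.resolve_right (measure_ne_top μ _)
  · have h5 := hab.2
    rw [hbdef, ENNReal.toReal_eq_zero_iff] at h5
    exact h5.resolve_right (measure_ne_top μ _)

end Main2

section Main3
variable {ℓ : ℕ} {p : ℕ → ℝ} {μ : Measure ℝ}

lemma oneStepGen [IsProbabilityMeasure μ] (hℓ : 2 ≤ ℓ)
    (hself : μ = ∑ i ∈ Finset.range (2 * ℓ), ENNReal.ofReal (p i) • μ.map (simMapT ℓ i))
    (nIic : μ (Set.Iic 0) = 0) (nIci : μ (Set.Ici 1) = 0)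
    {ε : ℕ} (hε : ε < ℓ) (a b : ℝ) (ha : (ε:ℝ) ≤ ℓ*a) (hb : (ℓ:ℝ)*b ≤ ε+1) :
    μ (Set.Ico a b) =
      ENNReal.ofReal (p ε) * μ (Set.Ico ((ℓ:ℝ)*a-ε) ((ℓ:ℝ)*b-ε)) +
      ENNReal.ofReal (p (ε+ℓ)) * μ (Set.Ioc ((ε:ℝ)+1-ℓ*b) ((ε:ℝ)+1-ℓ*a)) := by
  have hℓ0 : 0 < ℓ := by omega
  have e := meas_apply hself (measurableSet_Ico (a := a) (b := b))
  have key : ∀ i ∈ Finset.range (2*ℓ),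
      ENNReal.ofReal (p i) * μ (simMapT ℓ i ⁻¹' Set.Ico a b) =
        (if i = ε then ENNReal.ofReal (p ε) * μ (simMapT ℓ ε ⁻¹' Set.Ico a b) else 0) +
        (if i = ε+ℓ then ENNReal.ofReal (p (ε+ℓ)) * μ (simMapT ℓ (ε+ℓ) ⁻¹' Set.Ico a b)
          else 0) := by
    intro i hi
    rw [Finset.mem_range] at hi
    by_cases h2 : i < ℓ
    · by_cases h3 : i = ε
      · subst h3; rw [if_pos rfl, if_neg (by omega), add_zero]
      · rw [if_neg h3, if_neg (by omega), zero_add]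
        have hz : μ (simMapT ℓ i ⁻¹' Set.Ico a b) = 0 := by
          rw [pre_direct_Ico h2]
          rcases lt_or_gt_of_ne h3 with h4 | h4
          · have hc : (i:ℝ) + 1 ≤ ε := by exact_mod_cast h4
            refine measure_mono_null (fun x hx => ?_) nIci
            exact le_trans (by linarith) hx.1
          · have hc : (ε:ℝ) + 1 ≤ i := by exact_mod_cast h4
            refine measure_mono_null (fun x hx => ?_) nIic
            exact le_trans hx.2.le (by linarith)
        rw [hz, mul_zero]
    · by_cases h3 : i = ε+ℓ
      · subst h3; rw [if_pos rfl, if_neg (by omega), zero_add]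
      · rw [if_neg (by omega), if_neg h3, add_zero]
        have hz : μ (simMapT ℓ i ⁻¹' Set.Ico a b) = 0 := by
          rw [pre_refl_Ico hℓ0 h2]
          rcases (show i < ε+ℓ ∨ ε+ℓ < i by omega) with h4 | h4
          · have hc : ((i - ℓ + 1 : ℕ):ℝ) ≤ ε := by
              exact_mod_cast (show i - ℓ + 1 ≤ ε by omega)
            refine measure_mono_null (fun x hx => ?_) nIic
            exact le_trans hx.2 (by linarith)
          · have hc : (ε:ℝ) + 2 ≤ ((i - ℓ + 1 : ℕ):ℝ) := by
              exact_mod_cast (show ε + 2 ≤ i - ℓ + 1 by omega)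
            refine measure_mono_null (fun x hx => ?_) nIci
            exact le_trans (by linarith) hx.1.le
        rw [hz, mul_zero]
  rw [sum_two (by omega) (by omega) (by omega) key] at e
  rw [pre_direct_Ico hε a b, pre_refl_Ico hℓ0 (show ¬ ε+ℓ < ℓ by omega) a b] at e
  have e2 : ((ε+ℓ-ℓ+1 : ℕ):ℝ) = (ε:ℝ)+1 := by
    rw [show ε+ℓ-ℓ+1 = ε+1 by omega]; push_cast; ring
  rw [e2] at e
  exact e

lemma oneStepGenT [IsProbabilityMeasure μ] (hℓ : 2 ≤ ℓ)
    (hself : μ = ∑ i ∈ Finset.range (2 * ℓ), ENNReal.ofReal (p i) • μ.map (simMapT ℓ i))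
    (nIic : μ (Set.Iic 0) = 0) (nIci : μ (Set.Ici 1) = 0)
    {ε : ℕ} (hε : ε < ℓ) (a b : ℝ) (ha : (ε:ℝ) ≤ ℓ*a) (hb : (ℓ:ℝ)*b ≤ ε+1) :
    μ (Set.Ioc (1-b) (1-a)) =
      ENNReal.ofReal (p (2*ℓ-1-ε)) * μ (Set.Ico ((ℓ:ℝ)*a-ε) ((ℓ:ℝ)*b-ε)) +
      ENNReal.ofReal (p (ℓ-1-ε)) * μ (Set.Ioc ((ε:ℝ)+1-ℓ*b) ((ε:ℝ)+1-ℓ*a)) := by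
  have hℓ0 : 0 < ℓ := by omega
  have e := meas_apply hself (measurableSet_Ioc (a := 1-b) (b := 1-a))
  have key : ∀ i ∈ Finset.range (2*ℓ),
      ENNReal.ofReal (p i) * μ (simMapT ℓ i ⁻¹' Set.Ioc (1-b) (1-a)) =
        (if i = ℓ-1-ε then
          ENNReal.ofReal (p (ℓ-1-ε)) * μ (simMapT ℓ (ℓ-1-ε) ⁻¹' Set.Ioc (1-b) (1-a)) else 0) +
        (if i = 2*ℓ-1-ε then
          ENNReal.ofReal (p (2*ℓ-1-ε)) * μ (simMapT ℓ (2*ℓ-1-ε) ⁻¹' Set.Ioc (1-b) (1-a))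
          else 0) := by
    intro i hi
    rw [Finset.mem_range] at hi
    by_cases h2 : i < ℓ
    · by_cases h3 : i = ℓ-1-ε
      · subst h3; rw [if_pos rfl, if_neg (by omega), add_zero]
      · rw [if_neg h3, if_neg (by omega), zero_add]
        have hz : μ (simMapT ℓ i ⁻¹' Set.Ioc (1-b) (1-a)) = 0 := by
          rw [pre_direct_Ioc h2]
          rcases (show i + 2 + ε ≤ ℓ ∨ ℓ ≤ i + ε by omega) with h4 | h4
          · have hc : (i:ℝ) + 2 + ε ≤ ℓ := by exact_mod_cast h4
            refine measure_mono_null (fun x hx => Set.mem_Ici.mpr ?_) nIci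
            linarith [hx.1]
          · have hc : (ℓ:ℝ) ≤ i + ε := by exact_mod_cast h4
            refine measure_mono_null (fun x hx => Set.mem_Iic.mpr ?_) nIic
            linarith [hx.2]
        rw [hz, mul_zero]
    · by_cases h3 : i = 2*ℓ-1-ε
      · subst h3; rw [if_pos rfl, if_neg (by omega), zero_add]
      · rw [if_neg (by omega), if_neg h3, add_zero]
        have hz : μ (simMapT ℓ i ⁻¹' Set.Ioc (1-b) (1-a)) = 0 := by
          rw [pre_refl_Ioc hℓ0 h2]
          rcases (show (i-ℓ+1) + ε + 1 ≤ ℓ ∨ 2*ℓ ≤ i + ε by omega) with h4 | h4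
          · have hc : ((i-ℓ+1 : ℕ):ℝ) + ε + 1 ≤ ℓ := by exact_mod_cast h4
            refine measure_mono_null (fun x hx => Set.mem_Iic.mpr ?_) nIic
            linarith [hx.2]
          · have hc : (ℓ:ℝ) + 1 ≤ ((i-ℓ+1 : ℕ):ℝ) + ε := by
              exact_mod_cast (show ℓ + 1 ≤ (i-ℓ+1) + ε by omega)
            refine measure_mono_null (fun x hx => Set.mem_Ici.mpr ?_) nIci
            linarith [hx.1]
        rw [hz, mul_zero]
  rw [sum_two (by omega) (by omega) (by omega) key] at e
  rw [pre_direct_Ioc (show ℓ-1-ε < ℓ by omega) (1-b) (1-a),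
    pre_refl_Ioc hℓ0 (show ¬ 2*ℓ-1-ε < ℓ by omega) (1-b) (1-a)] at e
  have c1 : ((ℓ-1-ε : ℕ):ℝ) = (ℓ:ℝ) - 1 - ε := by
    rw [Nat.cast_sub (by omega), Nat.cast_sub (by omega)]; push_cast; ring
  have c2 : ((2*ℓ-1-ε-ℓ+1 : ℕ):ℝ) = (ℓ:ℝ) - ε := by
    rw [show 2*ℓ-1-ε-ℓ+1 = ℓ-ε by omega, Nat.cast_sub (by omega)]
  rw [c1, c2] at e
  rw [show (ℓ:ℝ)*(1-b) - ((ℓ:ℝ)-1-ε) = (ε:ℝ)+1-ℓ*b by ring,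
    show (ℓ:ℝ)*(1-a) - ((ℓ:ℝ)-1-ε) = (ε:ℝ)+1-ℓ*a by ring,
    show (ℓ:ℝ)-ε - (ℓ:ℝ)*(1-a) = (ℓ:ℝ)*a-ε by ring,
    show (ℓ:ℝ)-ε - (ℓ:ℝ)*(1-b) = (ℓ:ℝ)*b-ε by ring] at e
  rw [e, add_comm]

end Main3


lemma refl_img (u v : ℝ) : refl1 '' Set.Ico u v = Set.Ioc (1-v) (1-u) := by
  ext x
  simp only [Set.mem_image, Set.mem_Ico, Set.mem_Ioc, refl1]
  constructor
  · rintro ⟨y, ⟨h1, h2⟩, rfl⟩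
    constructor <;> linarith
  · rintro ⟨h1, h2⟩
    exact ⟨1 - x, ⟨by linarith, by linarith⟩, by ring⟩

lemma toReal_comb {x y : ℝ≥0∞} (hx : x ≠ ⊤) (hy : y ≠ ⊤) {c d : ℝ} (hc : 0 ≤ c) (hd : 0 ≤ d) :
    (ENNReal.ofReal c * x + ENNReal.ofReal d * y).toReal = c * x.toReal + d * y.toReal := by
  rw [ENNReal.toReal_add (ENNReal.mul_ne_top ENNReal.ofReal_ne_top hx)
    (ENNReal.mul_ne_top ENNReal.ofReal_ne_top hy), ENNReal.toReal_mul, ENNReal.toReal_mul,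
    ENNReal.toReal_ofReal hc, ENNReal.toReal_ofReal hd]

section Main4
variable {ℓ : ℕ} {p : ℕ → ℝ} {μ : Measure ℝ}

lemma oneStepR [IsProbabilityMeasure μ] (hℓ : 2 ≤ ℓ) (hp : ∀ i, 0 ≤ p i)
    (hself : μ = ∑ i ∈ Finset.range (2 * ℓ), ENNReal.ofReal (p i) • μ.map (simMapT ℓ i))
    (nIic : μ (Set.Iic 0) = 0) (nIci : μ (Set.Ici 1) = 0)
    {ε q m : ℕ} (hε : ε < ℓ) (hm : m < ℓ^q) :
    (mss μ (adicI ℓ (q+1) (ε*ℓ^q+m)) =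
      p ε * mss μ (adicI ℓ q m) + p (ε+ℓ) * mss μ (refl1 '' adicI ℓ q m)) ∧
    (mss μ (refl1 '' adicI ℓ (q+1) (ε*ℓ^q+m)) =
      p (2*ℓ-1-ε) * mss μ (adicI ℓ q m) + p (ℓ-1-ε) * mss μ (refl1 '' adicI ℓ q m)) := by
  have hℓ0 : (0:ℝ) < ℓ := by exact_mod_cast (show 0 < ℓ by omega)
  have hne : (ℓ:ℝ) ≠ 0 := hℓ0.ne'
  have hPq : (0:ℝ) < (ℓ:ℝ)^q := by positivity
  set a : ℝ := ((ε*ℓ^q+m : ℕ) : ℝ) / (ℓ:ℝ)^(q+1) with hadef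
  set b : ℝ := (((ε*ℓ^q+m : ℕ) : ℝ) + 1) / (ℓ:ℝ)^(q+1) with hbdef
  have hX : ((ε*ℓ^q+m : ℕ) : ℝ) = (ε:ℝ)*(ℓ:ℝ)^q + m := by push_cast; ring
  have hLa : (ℓ:ℝ)*a - ε = (m:ℝ)/(ℓ:ℝ)^q := by
    rw [hadef, hX]; field_simp; ring
  have hLb : (ℓ:ℝ)*b - ε = ((m:ℝ)+1)/(ℓ:ℝ)^q := by
    rw [hbdef, hX]; field_simp; ring
  have hmq : (0:ℝ) ≤ (m:ℝ)/(ℓ:ℝ)^q := by positivity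
  have hmq1 : ((m:ℝ)+1)/(ℓ:ℝ)^q ≤ 1 := by
    rw [div_le_one hPq]
    exact_mod_cast (show (m:ℕ)+1 ≤ ℓ^q from hm)
  have ha : (ε:ℝ) ≤ ℓ*a := by linarith
  have hb : (ℓ:ℝ)*b ≤ (ε:ℝ)+1 := by linarith
  have S0 : adicI ℓ (q+1) (ε*ℓ^q+m) = Set.Ico a b := rfl
  have S1 : Set.Ico ((ℓ:ℝ)*a-ε) ((ℓ:ℝ)*b-ε) = adicI ℓ q m := by
    rw [hLa, hLb]; rfl
  have S2 : Set.Ioc ((ε:ℝ)+1-ℓ*b) ((ε:ℝ)+1-ℓ*a) = refl1 '' adicI ℓ q m := by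
    rw [show adicI ℓ q m = Set.Ico ((m:ℝ)/(ℓ:ℝ)^q) (((m:ℝ)+1)/(ℓ:ℝ)^q) from rfl, refl_img,
      show (ε:ℝ)+1-ℓ*b = 1 - ((m:ℝ)+1)/(ℓ:ℝ)^q by linarith,
      show (ε:ℝ)+1-ℓ*a = 1 - (m:ℝ)/(ℓ:ℝ)^q by linarith]
  have ST : refl1 '' adicI ℓ (q+1) (ε*ℓ^q+m) = Set.Ioc (1-b) (1-a) := by
    rw [S0, refl_img]
  have E1 := oneStepGen hℓ hself nIic nIci hε a b ha hb
  have E2 := oneStepGenT hℓ hself nIic nIci hε a b ha hb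
  rw [S1, S2] at E1 E2
  constructor
  · rw [mss, S0, E1, toReal_comb (measure_ne_top μ _) (measure_ne_top μ _) (hp _) (hp _)]
    rfl
  · rw [mss, ST, E2, toReal_comb (measure_ne_top μ _) (measure_ne_top μ _) (hp _) (hp _)]
    rfl

lemma mainInd [IsProbabilityMeasure μ] (hℓ : 2 ≤ ℓ) (hp : ∀ i, 0 ≤ p i)
    (hsum : ∑ i ∈ Finset.range (2 * ℓ), p i = 1)
    (hpos : ∀ i < ℓ, 0 < p i + p (i + ℓ))
    (hself : μ = ∑ i ∈ Finset.range (2 * ℓ), ENNReal.ofReal (p i) • μ.map (simMapT ℓ i)) :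
    ∀ n k, k < ℓ^n → ∃ A B C D : ℝ, 0 ≤ A ∧ 0 ≤ B ∧ 0 ≤ C ∧ 0 ≤ D ∧ ∀ q m, m < ℓ^q →
      (mss μ (adicI ℓ (n+q) (k*ℓ^q+m)) =
        A * mss μ (adicI ℓ q m) + B * mss μ (refl1 '' adicI ℓ q m)) ∧
      (mss μ (refl1 '' adicI ℓ (n+q) (k*ℓ^q+m)) =
        C * mss μ (adicI ℓ q m) + D * mss μ (refl1 '' adicI ℓ q m)) := by
  have hout := null_out hℓ hp hsum hself
  have hIio : μ (Set.Iio 0) = 0 := measure_mono_null Set.subset_union_left hout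
  have hIoi : μ (Set.Ioi 1) = 0 := measure_mono_null Set.subset_union_right hout
  have hat := null_atoms hℓ hp hsum hpos hself hIio hIoi
  have nIic : μ (Set.Iic 0) = 0 := by
    refine measure_mono_null (t := Set.Iio 0 ∪ {0}) (fun x hx => ?_)
      (measure_union_null hIio hat.1)
    by_cases h : x = 0
    · exact Or.inr (Set.mem_singleton_iff.mpr h)
    · exact Or.inl (Set.mem_Iio.mpr (lt_of_le_of_ne (Set.mem_Iic.mp hx) h))
  have nIci : μ (Set.Ici 1) = 0 := by
    refine measure_mono_null (t := {1} ∪ Set.Ioi 1) (fun x hx => ?_)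
      (measure_union_null hat.2 hIoi)
    by_cases h : x = 1
    · exact Or.inl (Set.mem_singleton_iff.mpr h)
    · exact Or.inr (Set.mem_Ioi.mpr (lt_of_le_of_ne (Set.mem_Ici.mp hx) (Ne.symm h)))
  intro n
  induction n with
  | zero =>
    intro k hk
    obtain rfl : k = 0 := by simpa using hk
    refine ⟨1, 0, 0, 1, zero_le_one, le_refl 0, le_refl 0, zero_le_one, fun q m hm => ?_⟩
    rw [Nat.zero_add, Nat.zero_mul, Nat.zero_add]
    constructor <;> ring
  | succ n ih =>
    intro k hk
    have hℓn : 0 < ℓ := by omega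
    have hk0 : k / ℓ < ℓ^n := by
      rw [Nat.div_lt_iff_lt_mul hℓn, ← pow_succ]
      exact hk
    have hε : k % ℓ < ℓ := Nat.mod_lt _ hℓn
    obtain ⟨A0, B0, C0, D0, hA0, hB0, hC0, hD0, hIH⟩ := ih (k / ℓ) hk0
    set ε := k % ℓ
    refine ⟨A0 * p ε + B0 * p (2*ℓ-1-ε), A0 * p (ε+ℓ) + B0 * p (ℓ-1-ε),
            C0 * p ε + D0 * p (2*ℓ-1-ε), C0 * p (ε+ℓ) + D0 * p (ℓ-1-ε),
            add_nonneg (mul_nonneg (by assumption) (hp _)) (mul_nonneg (by assumption) (hp _)), add_nonneg (mul_nonneg (by assumption) (hp _)) (mul_nonneg (by assumption) (hp _)), add_nonneg (mul_nonneg (by assumption) (hp _)) (mul_nonneg (by assumption) (hp _)), add_nonneg (mul_nonneg (by assumption) (hp _)) (mul_nonneg (by assumption) (hp _)),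
            fun q m hm => ?_⟩
    have hm' : ε*ℓ^q + m < ℓ^(q+1) := by
      calc ε*ℓ^q + m < ε*ℓ^q + ℓ^q := by omega
        _ = (ε+1)*ℓ^q := by ring
        _ ≤ ℓ*ℓ^q := Nat.mul_le_mul_right _ hε
        _ = ℓ^(q+1) := by rw [pow_succ]; ring
    have hidx : k*ℓ^q + m = (k/ℓ)*ℓ^(q+1) + (ε*ℓ^q+m) := by
      conv_lhs => rw [← Nat.div_add_mod k ℓ]
      rw [pow_succ]; ring
    have hgen : (n+1)+q = n+(q+1) := by omega
    obtain ⟨e1, e2⟩ := hIH (q+1) (ε*ℓ^q+m) hm'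
    obtain ⟨f1, f2⟩ := oneStepR hℓ hp hself nIic nIci hε hm
    rw [hgen, hidx]
    constructor
    · rw [e1, f1, f2]; ring
    · rw [e2, f1, f2]; ring

end Main4

/-- For each ℓ-adic interval `I` there are `A(I), B(I) ≥ 0` with
`μ(IJ) = A(I) μ(J) + B(I) μ(T(J))` for all ℓ-adic intervals `J`. -/
theorem stmt6 (ℓ : ℕ) (hℓ : 2 ≤ ℓ) (p : ℕ → ℝ) (hp : ∀ i, 0 ≤ p i)
    (hsum : ∑ i ∈ Finset.range (2 * ℓ), p i = 1)
    (hpos : ∀ i < ℓ, 0 < p i + p (i + ℓ))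
    (μ : Measure ℝ) [IsProbabilityMeasure μ]
    (hself : μ = ∑ i ∈ Finset.range (2 * ℓ), ENNReal.ofReal (p i) • μ.map (simMapT ℓ i))
    (n k : ℕ) (hk : k < ℓ ^ n) :
    ∃ A B : ℝ, 0 ≤ A ∧ 0 ≤ B ∧ ∀ (q m : ℕ), m < ℓ ^ q →
      mss μ (adicI ℓ (n + q) (k * ℓ ^ q + m)) =
        A * mss μ (adicI ℓ q m) + B * mss μ (refl1 '' adicI ℓ q m) := by
  obtain ⟨A, B, C, D, hA, hB, _, _, h⟩ := mainInd hℓ hp hsum hpos hself n k hk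
  exact ⟨A, B, hA, hB, fun q m hm => (h q m hm).1⟩

end
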